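/- If Atm₀ is countably infinite, a formula φ is satisfiable in a finite MDM if and only if it is satisfiable in a finite quasi-MDM (an MDM possibly violating the functionality constraint C2). -/

import Mathlib

/-- Formulas of the language L of PLC. -/
inductive Form (Atm Val : Type) : Type
  | atom : Atm → Form Atm Val
  | dec  : Val → Form Atm Val
  | neg  : Form Atm Val → Form Atm Val
  | and  : Form Atm Val → Form Atm Val → Form Atm Val
  | boxI : Form Atm Val → Form Atm Val
  | boxF : Form Atm Val → Form Atm Val

variable {Atm Val : Type}

def Form.impl (φ ψ : Form Atm Val) : Form Atm Val := .neg (.and φ (.neg ψ))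

/-- Satisfaction at a pointed MCM (Γ,s,f) with Γ = (S,Φ). -/
def Sat (S : Set (Set Atm)) (Φ : Set ((Set Atm) → Val)) :
    Set Atm → ((Set Atm) → Val) → Form Atm Val → Prop
  | s, _, .atom p => p ∈ s
  | s, f, .dec x => f s = x
  | s, f, .neg φ => ¬ Sat S Φ s f φ
  | s, f, .and φ ψ => Sat S Φ s f φ ∧ Sat S Φ s f ψ
  | _, f, .boxI φ => ∀ s' ∈ S, Sat S Φ s' f φ
  | s, _, .boxF φ => ∀ f' ∈ Φ, Sat S Φ s f' φ

/-- A quasi-MDM: like an MDM but possibly violating the functionality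
constraint C2. -/
structure QMDM (Atm Val : Type) where
  W : Type
  RI : W → W → Prop
  RF : W → W → Prop
  equivI : Equivalence RI
  equivF : Equivalence RF
  VA : W → Set Atm
  VD : W → Set Val
  /-- C1: the relations commute. -/
  C1 : ∀ w v, (∃ u, RI w u ∧ RF u v) ↔ (∃ u, RF w u ∧ RI u v)
  /-- C3: ∼F-related worlds agree on atoms. -/
  C3 : ∀ w v, RF w v → VA w = VA v
  /-- C4: at most one decision atom per world. -/
  C4 : ∀ w, ∀ x y : Val, x ∈ VD w → y ∈ VD w → x = y
  /-- C5: at least one decision atom per world. -/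
  C5 : ∀ w, ∃ x : Val, x ∈ VD w

/-- The functionality constraint C2; a quasi-MDM satisfying it is an MDM. -/
def QMDM.FunctC2 (M : QMDM Atm Val) : Prop :=
  ∀ w v, M.VA w = M.VA v → M.RI w v → M.VD w = M.VD v

/-- Kripke satisfaction in a quasi-MDM. -/
def QSat (M : QMDM Atm Val) : M.W → Form Atm Val → Prop
  | w, .atom p => p ∈ M.VA w
  | w, .dec x => x ∈ M.VD w
  | w, .neg φ => ¬ QSat M w φ
  | w, .and φ ψ => QSat M w φ ∧ QSat M w ψ
  | w, .boxI φ => ∀ v, M.RI w v → QSat M v φ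
  | w, .boxF φ => ∀ v, M.RF w v → QSat M v φ

namespace MDMAux

def atomSet : Form Atm Val → Set Atm
  | .atom p => {p}
  | .dec _ => ∅
  |   .neg ψ => atomSet ψ
  |   .and ψ χ => atomSet ψ ∪ atomSet χ
  |   .boxI ψ => atomSet ψ
  |   .boxF ψ => atomSet ψ

lemma atomSet_finite (ψ : Form Atm Val) : (atomSet ψ).Finite := by
  induction ψ with
  | atom p => exact Set.finite_singleton p
  | dec x => exact Set.finite_empty
  | neg ψ ih => exact ih
  | and ψ χ ih1 ih2 => exact ih1.union ih2
  | boxI ψ ih => exact ih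
  | boxF ψ ih => exact ih

variable (M : QMDM Atm Val) (w₀ : M.W)

def grid : Set M.W := {w | ∃ m, M.RI w₀ m ∧ M.RF m w}

lemma grid_root : w₀ ∈ grid M w₀ := ⟨w₀, M.equivI.refl w₀, M.equivF.refl w₀⟩

lemma grid_of_RF {u v : M.W} (hu : u ∈ grid M w₀) (h : M.RF u v) : v ∈ grid M w₀ := by
  obtain ⟨m, h1, h2⟩ := hu
  exact ⟨m, h1, M.equivF.trans h2 h⟩

lemma grid_of_RI {u v : M.W} (hu : u ∈ grid M w₀) (h : M.RI u v) : v ∈ grid M w₀ := by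
  obtain ⟨m, h1, h2⟩ := hu
  obtain ⟨c, hc1, hc2⟩ := (M.C1 m v).mpr ⟨u, h2, h⟩
  exact ⟨c, M.equivI.trans h1 hc1, hc2⟩

lemma cell_nonempty {u v : M.W} (hu : u ∈ grid M w₀) (hv : v ∈ grid M w₀) :
    ∃ c, M.RF u c ∧ M.RI v c := by
  obtain ⟨a, ha1, ha2⟩ := hu
  obtain ⟨b, hb1, hb2⟩ := hv
  have hab : M.RI a b := M.equivI.trans (M.equivI.symm ha1) hb1
  obtain ⟨c, hc1, hc2⟩ := (M.C1 v a).mpr ⟨b, M.equivF.symm hb2, M.equivI.symm hab⟩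
  exact ⟨c, M.equivF.symm (M.equivF.trans hc2 ha2), hc1⟩



abbrev Idx := M.W × (M.W → M.W) × Bool

def Wnew : Type :=
  {x : Idx M × Idx M // x.1.1 ∈ grid M w₀ ∧ x.2.1 ∈ grid M w₀}

open Classical in
noncomputable def pick (r q c₁ c₂ : M.W) (h : ∃ c, M.RF r c ∧ M.RI q c) : M.W :=
  if M.RF r c₁ ∧ M.RI q c₁ then c₁
  else if M.RF r c₂ ∧ M.RI q c₂ then c₂
  else h.choose

lemma pick_spec (r q c₁ c₂ : M.W) (h : ∃ c, M.RF r c ∧ M.RI q c) :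
    M.RF r (pick M r q c₁ c₂ h) ∧ M.RI q (pick M r q c₁ c₂ h) := by
  unfold pick
  split_ifs with h1 h2
  · exact h1
  · exact h2
  · exact h.choose_spec

lemma pick_first {r q c₁ : M.W} (c₂ : M.W) (h : ∃ c, M.RF r c ∧ M.RI q c)
    (h1 : M.RF r c₁ ∧ M.RI q c₁) : pick M r q c₁ c₂ h = c₁ := by
  unfold pick
  rw [if_pos h1]

noncomputable def pt (x : Wnew M w₀) : M.W :=
  if xor x.1.1.2.2 x.1.2.2.2
  then pick M x.1.1.1 x.1.2.1 (x.1.1.2.1 x.1.2.1) (x.1.2.2.1 x.1.1.1)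
    (cell_nonempty M w₀ x.2.1 x.2.2)
  else pick M x.1.1.1 x.1.2.1 (x.1.2.2.1 x.1.1.1) (x.1.1.2.1 x.1.2.1)
    (cell_nonempty M w₀ x.2.1 x.2.2)

lemma pt_spec (x : Wnew M w₀) :
    M.RF x.1.1.1 (pt M w₀ x) ∧ M.RI x.1.2.1 (pt M w₀ x) := by
  unfold pt
  split
  · exact pick_spec M _ _ _ _ _
  · exact pick_spec M _ _ _ _ _

lemma pt_mem_grid (x : Wnew M w₀) : pt M w₀ x ∈ grid M w₀ :=
  grid_of_RF M w₀ x.2.1 (pt_spec M w₀ x).1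

lemma pt_col (d : M.W) (b : Idx M) (hd : d ∈ grid M w₀) (hb : b.1 ∈ grid M w₀)
    (hq : M.RI b.1 d) :
    pt M w₀ ⟨((d, fun _ => d, !b.2.2), b), ⟨hd, hb⟩⟩ = d := by
  unfold pt
  rw [show xor (!b.2.2) b.2.2 = true from by cases h : b.2.2 <;> rfl]
  simp only [if_true]
  exact pick_first M _ _ ⟨M.equivF.refl d, hq⟩

lemma pt_row (a : Idx M) (d : M.W) (ha : a.1 ∈ grid M w₀) (hd : d ∈ grid M w₀)
    (hr : M.RF a.1 d) :
    pt M w₀ ⟨(a, (d, fun _ => d, a.2.2)), ⟨ha, hd⟩⟩ = d := by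
  unfold pt
  rw [show xor a.2.2 a.2.2 = false from by cases h : a.2.2 <;> rfl]
  simp only [Bool.false_eq_true, if_false]
  exact pick_first M _ _ ⟨hr, M.equivI.refl d⟩

variable (g : Idx M → Atm)

noncomputable def Mnew : QMDM Atm Val where
  W := Wnew M w₀
  RI x y := x.1.2 = y.1.2
  RF x y := x.1.1 = y.1.1
  equivI := ⟨fun _ => rfl, Eq.symm, Eq.trans⟩
  equivF := ⟨fun _ => rfl, Eq.symm, Eq.trans⟩
  VA x := {p | (p ∈ M.VA x.1.1.1 ∧ p ∉ Set.range g) ∨ p = g x.1.1}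
  VD x := M.VD (pt M w₀ x)
  C1 := by
    intro x y
    constructor
    · intro _
      exact ⟨⟨(x.1.1, y.1.2), ⟨x.2.1, y.2.2⟩⟩, rfl, rfl⟩
    · intro _
      exact ⟨⟨(y.1.1, x.1.2), ⟨y.2.1, x.2.2⟩⟩, rfl, rfl⟩
  C3 := by
    intro x y h
    show {p | (p ∈ M.VA x.1.1.1 ∧ p ∉ Set.range g) ∨ p = g x.1.1} =
      {p | (p ∈ M.VA y.1.1.1 ∧ p ∉ Set.range g) ∨ p = g y.1.1}
    rw [show x.1.1 = y.1.1 from h]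
  C4 := fun x => M.C4 (pt M w₀ x)
  C5 := fun x => M.C5 (pt M w₀ x)

lemma Mnew_functC2 (hg : Function.Injective g) : (Mnew M w₀ g).FunctC2 := by
  intro x y hVA hRI
  have hx : g x.1.1 ∈ (Mnew M w₀ g).VA x := Or.inr rfl
  rw [hVA] at hx
  rcases hx with ⟨_, hnr⟩ | heq
  · exact absurd ⟨x.1.1, rfl⟩ hnr
  · have h1 : x.1.1 = y.1.1 := hg heq
    have h2 : x.1.2 = y.1.2 := hRI
    have hxy : x = y := Subtype.ext (Prod.ext h1 h2)
    rw [hxy]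

lemma truth (ψ : Form Atm Val) :
    ∀ (_ : ∀ p ∈ atomSet ψ, p ∉ Set.range g) (x : Wnew M w₀),
      QSat (Mnew M w₀ g) x ψ ↔ QSat M (pt M w₀ x) ψ := by
  induction ψ with
  | atom p =>
    intro hfr x
    have hp : p ∉ Set.range g := hfr p rfl
    show ((p ∈ M.VA x.1.1.1 ∧ p ∉ Set.range g) ∨ p = g x.1.1) ↔ p ∈ M.VA (pt M w₀ x)
    rw [← M.C3 _ _ (pt_spec M w₀ x).1]
    constructor
    · rintro (⟨h, _⟩ | h)
      · exact h
      · exact absurd ⟨x.1.1, h.symm⟩ hp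
    · intro h
      exact Or.inl ⟨h, hp⟩
  | dec v =>
    intro _ x
    exact Iff.rfl
  | neg ψ ih =>
    intro hfr x
    exact not_congr (ih hfr x)
  | and ψ χ ih1 ih2 =>
    intro hfr x
    exact and_congr (ih1 (fun p hp => hfr p (Or.inl hp)) x)
      (ih2 (fun p hp => hfr p (Or.inr hp)) x)
  | boxI ψ ih =>
    intro hfr x
    constructor
    · intro h d hd
      have hdG : d ∈ grid M w₀ := grid_of_RI M w₀ (pt_mem_grid M w₀ x) hd
      have hq : M.RI x.1.2.1 d := M.equivI.trans (pt_spec M w₀ x).2 hd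
      have hy := h ⟨((d, fun _ => d, !x.1.2.2.2), x.1.2), ⟨hdG, x.2.2⟩⟩ rfl
      replace hy := (ih hfr _).mp hy
      rw [pt_col M w₀ d x.1.2 hdG x.2.2 hq] at hy
      exact hy
    · intro h y hxy
      rw [ih hfr y]
      refine h (pt M w₀ y) ?_
      have h1 : M.RI x.1.2.1 (pt M w₀ x) := (pt_spec M w₀ x).2
      have h2 : M.RI y.1.2.1 (pt M w₀ y) := (pt_spec M w₀ y).2
      have hq : x.1.2.1 = y.1.2.1 := by rw [show x.1.2 = y.1.2 from hxy]
      exact M.equivI.trans (M.equivI.symm h1) (hq ▸ h2)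
  | boxF ψ ih =>
    intro hfr x
    constructor
    · intro h d hd
      have hdG : d ∈ grid M w₀ := grid_of_RF M w₀ (pt_mem_grid M w₀ x) hd
      have hr : M.RF x.1.1.1 d := M.equivF.trans (pt_spec M w₀ x).1 hd
      have hy := h ⟨(x.1.1, (d, fun _ => d, x.1.1.2.2)), ⟨x.2.1, hdG⟩⟩ rfl
      replace hy := (ih hfr _).mp hy
      rw [pt_row M w₀ x.1.1 d x.2.1 hdG hr] at hy
      exact hy
    · intro h y hxy
      rw [ih hfr y]
      refine h (pt M w₀ y) ?_
      have h1 : M.RF x.1.1.1 (pt M w₀ x) := (pt_spec M w₀ x).1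
      have h2 : M.RF y.1.1.1 (pt M w₀ y) := (pt_spec M w₀ y).1
      have hr : x.1.1.1 = y.1.1.1 := by rw [show x.1.1 = y.1.1 from hxy]
      exact M.equivF.trans (M.equivF.symm h1) (hr ▸ h2)


lemma exists_inj_fresh [Countable Atm] [Infinite Atm] (S : Set Atm) (hS : S.Finite)
    (T : Type) [Finite T] : ∃ g : T → Atm, Function.Injective g ∧ ∀ t, g t ∉ S := by
  have hSc : (Sᶜ : Set Atm).Infinite := hS.infinite_compl
  haveI : Infinite (Sᶜ : Set Atm) := hSc.to_subtype
  obtain ⟨f, hf⟩ := (countable_iff_exists_injective T).mp inferInstance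
  let e := Infinite.natEmbedding (Sᶜ : Set Atm)
  refine ⟨fun t => (e (f t)).1, ?_, ?_⟩
  · intro a b hab
    exact hf (e.injective (Subtype.ext hab))
  · intro t
    exact (e (f t)).2

end MDMAux

open MDMAux

/-- when Atm₀ is countably infinite, satisfiability in a finite MDM
(a finite quasi-MDM satisfying C2) coincides with satisfiability in a finite
quasi-MDM. -/
theorem finite_mdm_sat_iff_finite_qmdm_sat [Countable Atm] [Infinite Atm]
    (φ : Form Atm Val) :
    (∃ M : QMDM Atm Val, Finite M.W ∧ M.FunctC2 ∧ ∃ w : M.W, QSat M w φ) ↔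
    (∃ M : QMDM Atm Val, Finite M.W ∧ ∃ w : M.W, QSat M w φ) := by
  constructor
  · rintro ⟨M, hfin, _, w, hw⟩
    exact ⟨M, hfin, w, hw⟩
  · rintro ⟨M, hfin, w₀, hw₀⟩
    haveI : Finite M.W := hfin
    obtain ⟨g, hg, hgS⟩ := exists_inj_fresh (atomSet φ) (atomSet_finite φ) (Idx M)
    have hfr : ∀ p ∈ atomSet φ, p ∉ Set.range g := by
      rintro p hp ⟨t, rfl⟩
      exact hgS t hp
    refine ⟨Mnew M w₀ g, ?_, Mnew_functC2 M w₀ g hg, ?_⟩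
    · show Finite (Wnew M w₀)
      exact Subtype.finite
    · refine ⟨⟨((w₀, fun _ => w₀, !(false : Bool)), (w₀, fun _ => w₀, false)),
        ⟨grid_root M w₀, grid_root M w₀⟩⟩, ?_⟩
      refine (truth M w₀ g φ hfr _).mpr ?_
      rw [pt_col M w₀ w₀ (w₀, fun _ => w₀, false) (grid_root M w₀) (grid_root M w₀)
        (M.equivI.refl w₀)]
      exact hw₀
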